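/- For the two-memory translated system φ̃'_i = (1/N) Σ_j (C_{ij} ξ^k_i ξ^k_j + 2ε cos(φ̃_j − φ̃_i)) sin(φ̃_j − φ̃_i), if the initial diameter D(φ̃(0)) < π/2, then D(φ̃(t)) < π/2 for all t ≥ 0 and there exists λ > 0 with D(φ̃(t)) ≤ D(φ̃(0)) e^{−λ t} for all t ≥ 0. -/
import Mathlib

open Real Set Filter Topology

/-- For the translated two-memory system, if D(φ(0)) < π/2 then D(φ(t)) < π/2 for all
t ≥ 0 and the diameter decays exponentially. -/
theorem stmt_15 (N : ℕ) (hN : 1 ≤ N) (ε : ℝ) (hε : 0 < ε) (ξ1 ξ2 ξk : Fin N → ℝ)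
    (hξ1 : ∀ i, ξ1 i = 1 ∨ ξ1 i = -1) (hξ2 : ∀ i, ξ2 i = 1 ∨ ξ2 i = -1)
    (hk : ξk = ξ1 ∨ ξk = ξ2)
    (C : Matrix (Fin N) (Fin N) ℝ) (hC : ∀ i j, C i j = ξ1 i * ξ1 j + ξ2 i * ξ2 j)
    (φ : ℝ → Fin N → ℝ)
    (hode : ∀ t ∈ Set.Ici (0 : ℝ), ∀ i,
      HasDerivAt (fun s => φ s i)
        ((1 / N) * ∑ j, (C i j * ξk i * ξk j + 2 * ε * Real.cos (φ t j - φ t i)) *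
          Real.sin (φ t j - φ t i)) t)
    (h0 : (⨆ i, ⨆ j, (φ 0 i - φ 0 j)) < Real.pi / 2) :
    (∀ t ∈ Set.Ici (0 : ℝ), (⨆ i, ⨆ j, (φ t i - φ t j)) < Real.pi / 2) ∧
    ∃ lam : ℝ, 0 < lam ∧ ∀ t ∈ Set.Ici (0 : ℝ),
      (⨆ i, ⨆ j, (φ t i - φ t j)) ≤
        (⨆ i, ⨆ j, (φ 0 i - φ 0 j)) * Real.exp (-lam * t) := by
  haveI : Nonempty (Fin N) := ⟨⟨0, by omega⟩⟩
  have hNpos : (0:ℝ) < (N:ℝ) := by exact_mod_cast Nat.lt_of_lt_of_le Nat.zero_lt_one hN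
  have hinvN : (0:ℝ) < 1 / (N:ℝ) := by positivity
  have hπ := Real.pi_pos
  have hne : (Finset.univ : Finset (Fin N × Fin N)).Nonempty := Finset.univ_nonempty
  set f : ℝ → ℝ := fun t => Finset.univ.sup' hne (fun p : Fin N × Fin N => φ t p.1 - φ t p.2)
    with hfdef
  have hub : ∀ t (l m : Fin N), φ t l - φ t m ≤ f t := by
    intro t l m
    rw [hfdef]
    exact Finset.le_sup' (fun p : Fin N × Fin N => φ t p.1 - φ t p.2) (Finset.mem_univ (l, m))
  have hActive : ∀ x, ∃ p : Fin N × Fin N, φ x p.1 - φ x p.2 = f x := by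
    intro x
    obtain ⟨p, -, hp⟩ := Finset.exists_mem_eq_sup' hne
      (fun p : Fin N × Fin N => φ x p.1 - φ x p.2)
    exact ⟨p, by rw [hfdef]; exact hp.symm⟩
  have hfeq : ∀ t, (⨆ i, ⨆ j, (φ t i - φ t j)) = f t := by
    intro t
    apply le_antisymm
    · refine ciSup_le fun i => ciSup_le fun j => hub t i j
    · obtain ⟨p, hp⟩ := hActive t
      calc f t = φ t p.1 - φ t p.2 := hp.symm
        _ ≤ ⨆ j, (φ t p.1 - φ t j) :=
            le_ciSup (f := fun j => φ t p.1 - φ t j)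
              (Set.Finite.bddAbove (Set.finite_range _)) p.2
        _ ≤ ⨆ i, ⨆ j, (φ t i - φ t j) :=
            le_ciSup (f := fun i => ⨆ j, (φ t i - φ t j))
              (Set.Finite.bddAbove (Set.finite_range _)) p.1
  have hD0 : ∀ t, 0 ≤ f t := by
    intro t
    obtain ⟨i⟩ := ‹Nonempty (Fin N)›
    have := hub t i i
    linarith
  set v : ℝ → Fin N → ℝ := fun t i =>
    (1 / N) * ∑ j, (C i j * ξk i * ξk j + 2 * ε * Real.cos (φ t j - φ t i)) *
      Real.sin (φ t j - φ t i) with hvdef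
  have hderiv : ∀ x, 0 ≤ x → ∀ i, HasDerivAt (fun s => φ s i) (v x i) x := by
    intro x hx i
    simpa [hvdef] using hode x hx i
  have hCξ : ∀ i j, 0 ≤ C i j * ξk i * ξk j := by
    intro i j
    rcases hk with h | h <;> subst h <;>
      rcases hξ1 i with h1 | h1 <;> rcases hξ1 j with h2 | h2 <;>
      rcases hξ2 i with h3 | h3 <;> rcases hξ2 j with h4 | h4 <;>
      simp [hC, h1, h2, h3, h4] <;> norm_num
  -- the key differential inequality along a maximizing pair
  have key : ∀ x, 0 ≤ x → f x < π / 2 → ∀ p : Fin N × Fin N, φ x p.1 - φ x p.2 = f x →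
      v x p.1 - v x p.2 ≤ -(4 * ε / N) * Real.cos (f x) * Real.sin (f x) := by
    intro x hx hfx p hp
    obtain ⟨i, j⟩ := p
    simp only at hp ⊢
    have hub' := hub x
    have hle1 : ∀ l, φ x l ≤ φ x i := fun l => by have := hub' l j; linarith
    have hle2 : ∀ l, φ x j ≤ φ x l := fun l => by have := hub' i l; linarith
    have hD : 0 ≤ f x := hD0 x
    have hsinD : 0 ≤ Real.sin (f x) :=
      Real.sin_nonneg_of_nonneg_of_le_pi hD (by linarith)
    have hcosnn : ∀ l m : Fin N, 0 ≤ Real.cos (φ x l - φ x m) := by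
      intro l m
      apply Real.cos_nonneg_of_mem_Icc
      constructor
      · have := hub' m l; linarith
      · have := hub' l m; linarith
    have hAnn : ∀ l m : Fin N, 0 ≤ C l m * ξk l * ξk m + 2 * ε * Real.cos (φ x m - φ x l) :=
      fun l m => add_nonneg (hCξ l m) (mul_nonneg (by linarith) (hcosnn m l))
    have hsum1 : ∑ l, (C i l * ξk i * ξk l + 2 * ε * Real.cos (φ x l - φ x i)) *
        Real.sin (φ x l - φ x i)
        ≤ (C i j * ξk i * ξk j + 2 * ε * Real.cos (φ x j - φ x i)) *
          Real.sin (φ x j - φ x i) := by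
      have step : ∀ l ∈ Finset.univ,
          (C i l * ξk i * ξk l + 2 * ε * Real.cos (φ x l - φ x i)) * Real.sin (φ x l - φ x i)
          ≤ if l = j then (C i j * ξk i * ξk j + 2 * ε * Real.cos (φ x j - φ x i)) *
              Real.sin (φ x j - φ x i) else 0 := by
        intro l _
        by_cases h : l = j
        · subst h; simp
        · simp only [h, if_false]
          have ha := hAnn i l
          have hs : Real.sin (φ x l - φ x i) ≤ 0 :=
            Real.sin_nonpos_of_nonpos_of_neg_pi_le (by have := hle1 l; linarith)
              (by have := hub' i l; linarith)
          nlinarith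
      calc ∑ l, (C i l * ξk i * ξk l + 2 * ε * Real.cos (φ x l - φ x i)) *
            Real.sin (φ x l - φ x i)
          ≤ ∑ l, (if l = j then (C i j * ξk i * ξk j + 2 * ε * Real.cos (φ x j - φ x i)) *
              Real.sin (φ x j - φ x i) else 0) := Finset.sum_le_sum step
        _ = _ := by simp
    have hsum2 : (C j i * ξk j * ξk i + 2 * ε * Real.cos (φ x i - φ x j)) *
        Real.sin (φ x i - φ x j)
        ≤ ∑ l, (C j l * ξk j * ξk l + 2 * ε * Real.cos (φ x l - φ x j)) *
          Real.sin (φ x l - φ x j) := by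
      apply Finset.single_le_sum (f := fun l =>
        (C j l * ξk j * ξk l + 2 * ε * Real.cos (φ x l - φ x j)) * Real.sin (φ x l - φ x j))
        (fun l _ => mul_nonneg (hAnn j l)
          (Real.sin_nonneg_of_nonneg_of_le_pi (by have := hle2 l; linarith)
            (by have := hub' l j; linarith))) (Finset.mem_univ i)
    have a1 := mul_le_mul_of_nonneg_left hsum1 (le_of_lt hinvN)
    have a2 := mul_le_mul_of_nonneg_left hsum2 (le_of_lt hinvN)
    have hvi : v x i - v x j ≤ (1 / (N:ℝ)) *
        ((C i j * ξk i * ξk j + 2 * ε * Real.cos (φ x j - φ x i)) * Real.sin (φ x j - φ x i)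
        - (C j i * ξk j * ξk i + 2 * ε * Real.cos (φ x i - φ x j)) *
          Real.sin (φ x i - φ x j)) := by
      simp only [hvdef]
      linarith
    have hji : φ x j - φ x i = -(f x) := by linarith
    have hij : φ x i - φ x j = f x := hp
    rw [hji, hij, Real.sin_neg, Real.cos_neg] at hvi
    have hT : 4 * ε * Real.cos (f x) ≤
        (C i j * ξk i * ξk j + 2 * ε * Real.cos (f x)) +
        (C j i * ξk j * ξk i + 2 * ε * Real.cos (f x)) := by
      linarith [hCξ i j, hCξ j i]
    have h5 := mul_le_mul_of_nonneg_right hT hsinD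
    have h6 := mul_le_mul_of_nonneg_left h5 (le_of_lt hinvN)
    calc v x i - v x j ≤ _ := hvi
      _ = -((1 / (N:ℝ)) * (((C i j * ξk i * ξk j + 2 * ε * Real.cos (f x)) +
          (C j i * ξk j * ξk i + 2 * ε * Real.cos (f x))) * Real.sin (f x))) := by ring
      _ ≤ -((1 / (N:ℝ)) * ((4 * ε * Real.cos (f x)) * Real.sin (f x))) := by linarith
      _ = -(4 * ε / N) * Real.cos (f x) * Real.sin (f x) := by ring
  -- the Dini-type upper derivative
  set f' : ℝ → ℝ := fun x =>
    sSup ((fun p : Fin N × Fin N => v x p.1 - v x p.2) ''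
      {p : Fin N × Fin N | φ x p.1 - φ x p.2 = f x}) with hf'def
  have hSne : ∀ x, ((fun p : Fin N × Fin N => v x p.1 - v x p.2) ''
      {p : Fin N × Fin N | φ x p.1 - φ x p.2 = f x}).Nonempty := by
    intro x
    obtain ⟨p, hp⟩ := hActive x
    exact ⟨_, ⟨p, hp, rfl⟩⟩
  have hSbdd : ∀ x, BddAbove ((fun p : Fin N × Fin N => v x p.1 - v x p.2) ''
      {p : Fin N × Fin N | φ x p.1 - φ x p.2 = f x}) :=
    fun x => (Set.toFinite _).bddAbove
  have hf'le : ∀ x (c : ℝ),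
      (∀ p : Fin N × Fin N, φ x p.1 - φ x p.2 = f x → v x p.1 - v x p.2 ≤ c) → f' x ≤ c := by
    intro x c hc
    rw [hf'def]
    exact csSup_le (hSne x) (by rintro y ⟨p, hp, rfl⟩; exact hc p hp)
  have hlef' : ∀ x (p : Fin N × Fin N), φ x p.1 - φ x p.2 = f x →
      v x p.1 - v x p.2 ≤ f' x := by
    intro x p hp
    rw [hf'def]
    exact le_csSup (hSbdd x) ⟨p, hp, rfl⟩
  have hDini : ∀ x, 0 ≤ x → ∀ r, f' x < r →
      ∀ᶠ z in 𝓝[>] x, (z - x)⁻¹ * (f z - f x) < r := by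
    intro x hx r hr
    have hall : ∀ p : Fin N × Fin N,
        ∀ᶠ z in 𝓝[>] x, φ z p.1 - φ z p.2 < f x + r * (z - x) := by
      intro p
      by_cases hp : φ x p.1 - φ x p.2 = f x
      · have hd : HasDerivAt (fun z => φ z p.1 - φ z p.2) (v x p.1 - v x p.2) x :=
          (hderiv x hx p.1).sub (hderiv x hx p.2)
        have hslope : Tendsto (slope (fun z => φ z p.1 - φ z p.2) x) (𝓝[>] x)
            (𝓝 (v x p.1 - v x p.2)) :=
          (hasDerivAt_iff_tendsto_slope.mp hd).mono_left
            (nhdsWithin_mono x fun z hz => ne_of_gt hz)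
        have hev := hslope.eventually_lt_const (lt_of_le_of_lt (hlef' x p hp) hr)
        filter_upwards [hev, self_mem_nhdsWithin] with z hz hzx
        have hzx' : (0:ℝ) < z - x := sub_pos.2 hzx
        rw [slope_def_field, div_lt_iff₀ hzx'] at hz
        linarith
      · have hlt : φ x p.1 - φ x p.2 < f x := lt_of_le_of_ne (hub x p.1 p.2) hp
        have hcont : ContinuousAt (fun z => φ z p.1 - φ z p.2 - r * (z - x)) x :=
          (((hderiv x hx p.1).continuousAt.sub (hderiv x hx p.2).continuousAt).sub
            (by fun_prop))
        have hev : ∀ᶠ z in 𝓝 x, φ z p.1 - φ z p.2 - r * (z - x) < f x :=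
          hcont.eventually_lt_const (by simpa using hlt)
        exact (hev.filter_mono nhdsWithin_le_nhds).mono (fun z hz => by linarith)
    filter_upwards [Filter.eventually_all.2 hall, self_mem_nhdsWithin] with z hz hzx
    have hzx' : (0:ℝ) < z - x := sub_pos.2 hzx
    have hfz : f z < f x + r * (z - x) := by
      rw [hfdef]
      exact (Finset.sup'_lt_iff hne).2 fun p _ => hz p
    rw [inv_mul_lt_iff₀ hzx']
    nlinarith
  have hcontf : ContinuousOn f (Set.Ici (0:ℝ)) := by
    rw [hfdef]
    exact ContinuousOn.finset_sup'_apply hne fun p _ => fun y hy =>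
      ((hderiv y hy p.1).continuousAt.sub (hderiv y hy p.2).continuousAt).continuousWithinAt
  -- Gronwall wrapper
  have gron : ∀ (K b : ℝ), 0 ≤ b → (∀ x ∈ Set.Ico (0:ℝ) b, f' x ≤ K * f x) →
      ∀ t ∈ Set.Icc (0:ℝ) b, f t ≤ f 0 * Real.exp (K * t) := by
    intro K b hb hbd t ht
    have H := le_gronwallBound_of_liminf_deriv_right_le (f := f) (f' := f') (δ := f 0)
      (K := K) (ε := 0) (a := 0) (b := b)
      (hcontf.mono Set.Icc_subset_Ici_self)
      (fun x hx r hr => (hDini x hx.1 r hr).frequently)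
      le_rfl
      (fun x hx => by rw [add_zero]; exact hbd x hx)
      t ht
    rwa [sub_zero, gronwallBound_ε0] at H
  have hbd1 : ∀ x, 0 ≤ x → f x < π / 2 → f' x ≤ 0 := by
    intro x hx hfx
    apply hf'le
    intro p hp
    have h := key x hx hfx p hp
    have hcos : 0 ≤ Real.cos (f x) :=
      Real.cos_nonneg_of_mem_Icc ⟨by linarith [hD0 x], le_of_lt hfx⟩
    have hsin : 0 ≤ Real.sin (f x) :=
      Real.sin_nonneg_of_nonneg_of_le_pi (hD0 x) (by linarith)
    nlinarith [mul_nonneg (mul_nonneg (le_of_lt (show (0:ℝ) < 4 * ε / N by positivity)) hcos)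
      hsin]
  have hf0lt : f 0 < π / 2 := by rw [← hfeq 0]; exact h0
  -- invariance of the region f < π/2
  have hinv : ∀ t, 0 ≤ t → f t < π / 2 := by
    by_contra hcon
    push_neg at hcon
    obtain ⟨t0, ht0, ht0'⟩ := hcon
    set S : Set ℝ := {t | 0 ≤ t ∧ π / 2 ≤ f t} with hSdef
    have hSclosed : IsClosed S := by
      have : S = Set.Ici (0:ℝ) ∩ f ⁻¹' Set.Ici (π / 2) := by
        ext s; simp [hSdef]
      rw [this]
      exact ContinuousOn.preimage_isClosed_of_isClosed hcontf isClosed_Ici isClosed_Ici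
    have hSnon : S.Nonempty := ⟨t0, ht0, ht0'⟩
    have hSbb : BddBelow S := ⟨0, fun t ht => ht.1⟩
    have hTS : sInf S ∈ S := hSclosed.csInf_mem hSnon hSbb
    set T := sInf S with hTdef
    have hT0 : 0 ≤ T := hTS.1
    have hTpos : 0 < T := by
      rcases lt_or_eq_of_le hT0 with h | h
      · exact h
      · exfalso; rw [← h] at hTS; exact absurd hTS.2 (not_le.2 hf0lt)
    have hless : ∀ s, 0 ≤ s → s < T → f s < π / 2 := by
      intro s hs hsT
      by_contra hns
      exact absurd (csInf_le hSbb ⟨hs, not_lt.1 hns⟩) (not_le.2 hsT)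
    have hbb : ∀ s, 0 ≤ s → s < T → f s ≤ f 0 := by
      intro s hs hsT
      have := gron 0 s hs (fun x hx => by
        rw [zero_mul]
        exact hbd1 x hx.1 (hless x hx.1 (lt_of_lt_of_le hx.2 (le_of_lt hsT)))) s ⟨hs, le_rfl⟩
      simpa using this
    have hcT : ContinuousWithinAt f (Set.Ico 0 T) T :=
      (hcontf T hT0).mono Set.Ico_subset_Ici_self
    haveI hnb : (𝓝[Set.Ico (0:ℝ) T] T).NeBot := by
      apply mem_closure_iff_nhdsWithin_neBot.1
      rw [closure_Ico (ne_of_lt hTpos)]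
      exact ⟨hT0, le_rfl⟩
    have hfT : f T ≤ f 0 := le_of_tendsto hcT (by
      filter_upwards [self_mem_nhdsWithin] with s hs
      exact hbb s hs.1 hs.2)
    exact absurd hTS.2 (not_le.2 (lt_of_le_of_lt hfT hf0lt))
  have hmono : ∀ t, 0 ≤ t → f t ≤ f 0 := by
    intro t ht
    have := gron 0 t ht (fun x hx => by
      rw [zero_mul]; exact hbd1 x hx.1 (hinv x hx.1)) t ⟨ht, le_rfl⟩
    simpa using this
  -- the exponential decay
  have hcos0 : 0 < Real.cos (f 0) := Real.cos_pos_of_mem_Ioo ⟨by linarith [hD0 0], hf0lt⟩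
  set lam : ℝ := 4 * ε / N * (2 / π * Real.cos (f 0)) with hlam
  have hlampos : 0 < lam := by
    rw [hlam]
    apply mul_pos (by positivity) (mul_pos (by positivity) hcos0)
  have hbd2 : ∀ x, 0 ≤ x → f' x ≤ -lam * f x := by
    intro x hx
    apply hf'le
    intro p hp
    have h := key x hx (hinv x hx) p hp
    have h1 : 0 ≤ f x := hD0 x
    have h2 : f x ≤ f 0 := hmono x hx
    have hsin : 2 / π * f x ≤ Real.sin (f x) := Real.mul_le_sin h1 (by linarith)
    have hcos : Real.cos (f 0) ≤ Real.cos (f x) :=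
      Real.cos_le_cos_of_nonneg_of_le_pi h1 (by linarith) h2
    have h3 : 0 ≤ 2 / π * f x := by positivity
    have hcosx : 0 ≤ Real.cos (f x) := le_trans (le_of_lt hcos0) hcos
    have h4 : Real.cos (f 0) * (2 / π * f x) ≤ Real.cos (f x) * Real.sin (f x) :=
      le_trans (mul_le_mul_of_nonneg_right hcos h3) (mul_le_mul_of_nonneg_left hsin hcosx)
    have h5 : (0:ℝ) < 4 * ε / (N:ℝ) := by positivity
    have h6 := mul_le_mul_of_nonneg_left h4 (le_of_lt h5)
    calc v x p.1 - v x p.2 ≤ -(4 * ε / N) * Real.cos (f x) * Real.sin (f x) := h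
      _ ≤ -(4 * ε / N * (Real.cos (f 0) * (2 / π * f x))) := by nlinarith
      _ = -lam * f x := by rw [hlam]; ring
  constructor
  · intro t ht
    rw [hfeq t]
    exact hinv t ht
  · refine ⟨lam, hlampos, fun t ht => ?_⟩
    have ht' : (0:ℝ) ≤ t := ht
    rw [hfeq t, hfeq 0]
    have := gron (-lam) t ht' (fun x hx => hbd2 x hx.1) t ⟨ht', le_rfl⟩
    simpa using this
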